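/- Let B be a unital complex *-algebra, β an exponential one-parameter group on B, π : B → B a linear map, and c a nonzero purely imaginary complex number. If π ∘ β_c = β_c ∘ π, then π ∘ β_z = β_z ∘ π for all z ∈ ℂ; and if π ∘ β_c = β_{−c} ∘ π, then π ∘ β_z = β_{−z} ∘ π for all z ∈ ℂ. -/

import Mathlib

/-- A function `f : ℂ → ℂ` is of exponential type: it is entire and satisfies a bound
`|f z| ≤ M * exp (r * |Im z|)`. -/
def ExpType (f : ℂ → ℂ) : Prop :=
  Differentiable ℂ f ∧
    ∃ M r : ℝ, 0 < M ∧ 0 < r ∧ ∀ z : ℂ, ‖f z‖ ≤ M * Real.exp (r * |z.im|)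

/-- A function from `ℂ` into a complex vector space `V` is of finite exponential type if it is a
finite linear combination of functions of exponential type with coefficients in `V`. -/
def FinExpType {V : Type*} [AddCommGroup V] [Module ℂ V] (f : ℂ → V) : Prop :=
  ∃ (n : ℕ) (v : Fin n → V) (g : Fin n → ℂ → ℂ),
    (∀ j, ExpType (g j)) ∧ ∀ z : ℂ, f z = ∑ j, g j z • v j

/-- A one-parameter group on a unital complex *-algebra `B`: a family of algebra automorphisms
`β z` with `β (y + z) = β y ∘ β z` and `star (β z b) = β (conj z) (star b)`. -/
def IsOneParamGroup {B : Type*} [Ring B] [Algebra ℂ B] [StarRing B] [StarModule ℂ B]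
    (β : ℂ → (B ≃ₐ[ℂ] B)) : Prop :=
  (∀ y z : ℂ, ∀ b : B, β (y + z) b = β y (β z b)) ∧
    (∀ z : ℂ, ∀ b : B, star (β z b) = β (starRingEnd ℂ z) (star b))

/-- An exponential one-parameter group: a one-parameter group such that `z ↦ β z b` is of finite
exponential type for every `b`. -/
def IsExpOneParamGroup {B : Type*} [Ring B] [Algebra ℂ B] [StarRing B] [StarModule ℂ B]
    (β : ℂ → (B ≃ₐ[ℂ] B)) : Prop :=
  IsOneParamGroup β ∧ ∀ b : B, FinExpType (fun z => β z b)

section Aux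

variable {V : Type*} [AddCommGroup V] [Module ℂ V]

lemma ExpType.mul {f g : ℂ → ℂ} (hf : ExpType f) (hg : ExpType g) :
    ExpType (fun z => f z * g z) := by
  obtain ⟨hfd, M1, r1, hM1, hr1, hb1⟩ := hf
  obtain ⟨hgd, M2, r2, hM2, hr2, hb2⟩ := hg
  refine ⟨hfd.mul hgd, M1 * M2, r1 + r2, mul_pos hM1 hM2, add_pos hr1 hr2, fun z => ?_⟩
  rw [norm_mul]
  calc ‖f z‖ * ‖g z‖
      ≤ (M1 * Real.exp (r1 * |z.im|)) * (M2 * Real.exp (r2 * |z.im|)) := by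
        apply mul_le_mul (hb1 z) (hb2 z) (norm_nonneg _)
        positivity
    _ = M1 * M2 * Real.exp ((r1 + r2) * |z.im|) := by
        rw [add_mul, Real.exp_add]; ring

lemma ExpType.comp_neg {f : ℂ → ℂ} (hf : ExpType f) : ExpType (fun z => f (-z)) := by
  obtain ⟨hfd, M, r, hM, hr, hb⟩ := hf
  refine ⟨hfd.comp differentiable_neg, M, r, hM, hr, fun z => ?_⟩
  have := hb (-z)
  simpa using this

lemma finExpType_zero : FinExpType (fun _ : ℂ => (0 : V)) :=
  ⟨0, Fin.elim0, Fin.elim0, fun j => j.elim0, fun _ => by simp⟩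

lemma FinExpType.add {f g : ℂ → V} (hf : FinExpType f) (hg : FinExpType g) :
    FinExpType (fun z => f z + g z) := by
  obtain ⟨n, v, gf, hgf, hf⟩ := hf
  obtain ⟨m, w, gg, hgg, hg⟩ := hg
  refine ⟨n + m, Fin.addCases v w, Fin.addCases gf gg, fun j => ?_, fun z => ?_⟩
  · refine Fin.addCases (fun i => ?_) (fun i => ?_) j <;> simp [hgf, hgg]
  · show f z + g z = _
    rw [hf z, hg z, Fin.sum_univ_add]
    simp

lemma FinExpType.sum {ι : Type*} (s : Finset ι) (f : ι → ℂ → V)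
    (h : ∀ i ∈ s, FinExpType (f i)) : FinExpType (fun z => ∑ i ∈ s, f i z) := by
  classical
  induction s using Finset.cons_induction with
  | empty => simpa using (finExpType_zero : FinExpType (fun _ : ℂ => (0 : V)))
  | cons a s ha ih =>
      simp only [Finset.sum_cons]
      exact (h a (Finset.mem_cons_self a s)).add (ih fun i hi => h i (Finset.mem_cons_of_mem hi)) |>.imp
        (fun n hn => hn) |>.elim fun n hn => ⟨n, hn⟩

lemma FinExpType.smulFun {f : ℂ → V} {g : ℂ → ℂ} (hg : ExpType g) (hf : FinExpType f) :
    FinExpType (fun z => g z • f z) := by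
  obtain ⟨n, v, gs, hgs, hrep⟩ := hf
  refine ⟨n, v, fun j z => g z * gs j z, fun j => hg.mul (hgs j), fun z => ?_⟩
  show g z • f z = _
  rw [hrep z, Finset.smul_sum]
  simp [smul_smul]

lemma FinExpType.comp_neg {f : ℂ → V} (hf : FinExpType f) : FinExpType (fun z => f (-z)) := by
  obtain ⟨n, v, g, hg, hrep⟩ := hf
  exact ⟨n, v, fun j z => g j (-z), fun j => (hg j).comp_neg, fun z => hrep (-z)⟩

/-- Scalarized version under a dual functional. -/
lemma FinExpType.dual {f : ℂ → V} (hf : FinExpType f) (φ : Module.Dual ℂ V) :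
    Differentiable ℂ (fun z => φ (f z)) ∧
      ∃ C r : ℝ, 0 ≤ C ∧ ∀ z : ℂ, ‖φ (f z)‖ ≤ C * Real.exp (r * |z.im|) := by
  obtain ⟨n, v, g, hg, hrep⟩ := hf
  choose M r hM hr hb using fun j => (hg j).2
  have hφ : ∀ z, φ (f z) = ∑ j, g j z * φ (v j) := by
    intro z; rw [hrep z]; simp [smul_eq_mul]
  constructor
  · have : (fun z => φ (f z)) = fun z => ∑ j, g j z * φ (v j) := funext hφ
    rw [this]
    exact Differentiable.fun_sum fun j _ => ((hg j).1).mul_const _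
  · have hCnn : (0:ℝ) ≤ ∑ j, M j * ‖φ (v j)‖ :=
      Finset.sum_nonneg fun j _ => mul_nonneg (hM j).le (norm_nonneg _)
    refine ⟨∑ j, M j * ‖φ (v j)‖, ∑ j, r j, hCnn, fun z => ?_⟩
    rw [hφ z]
    calc ‖∑ j, g j z * φ (v j)‖
        ≤ ∑ j, ‖g j z * φ (v j)‖ :=
          norm_sum_le _ _
      _ ≤ ∑ j, (M j * ‖φ (v j)‖) * Real.exp ((∑ k, r k) * |z.im|) := by
          apply Finset.sum_le_sum
          intro j _
          rw [norm_mul]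
          have h1 : ‖g j z‖ ≤ M j * Real.exp (r j * |z.im|) := hb j z
          have h2 : Real.exp (r j * |z.im|) ≤ Real.exp ((∑ k, r k) * |z.im|) := by
            apply Real.exp_le_exp.2
            apply mul_le_mul_of_nonneg_right _ (abs_nonneg _)
            exact Finset.single_le_sum (fun k _ => (hr k).le) (Finset.mem_univ j)
          calc ‖g j z‖ * ‖φ (v j)‖
              ≤ (M j * Real.exp (r j * |z.im|)) * ‖φ (v j)‖ :=
                mul_le_mul_of_nonneg_right h1 (norm_nonneg _)
            _ ≤ (M j * Real.exp ((∑ k, r k) * |z.im|)) * ‖φ (v j)‖ := by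
                apply mul_le_mul_of_nonneg_right _ (norm_nonneg _)
                exact mul_le_mul_of_nonneg_left h2 (hM j).le
            _ = (M j * ‖φ (v j)‖) * Real.exp ((∑ k, r k) * |z.im|) := by ring
      _ = (∑ j, M j * ‖φ (v j)‖) * Real.exp ((∑ k, r k) * |z.im|) :=
          (Finset.sum_mul _ _ _).symm

/-- A scalar entire function with exponential-type bound, periodic with a period of nonzero
imaginary part, is constant. -/
lemma const_of_periodic {f : ℂ → ℂ} (hfd : Differentiable ℂ f) (C r : ℝ) (hC : 0 ≤ C)
    (hb : ∀ z : ℂ, ‖f z‖ ≤ C * Real.exp (r * |z.im|))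
    (c : ℂ) (hcim : c.im ≠ 0) (hper : ∀ z, f (z + c) = f z) (z : ℂ) : f z = f 0 := by
  have hper' : Function.Periodic f c := hper
  have hbdd : Bornology.IsBounded (Set.range f) := by
    rw [isBounded_iff_forall_norm_le]
    refine ⟨C * Real.exp (|r| * |c.im|), ?_⟩
    rintro x ⟨w, rfl⟩
    set n : ℤ := ⌊w.im / c.im⌋ with hn
    set u : ℂ := w - (n : ℂ) * c with hu
    have hfu : f w = f u := by
      have := (hper'.int_mul n) u
      rw [hu] at this ⊢
      rw [← this]; ring_nf
    have him : |u.im| ≤ |c.im| := by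
      have : u.im = c.im * (w.im / c.im - n) := by
        rw [hu]; simp [Complex.sub_im, Complex.mul_im]
        field_simp
      rw [this, abs_mul]
      have hfr : |w.im / c.im - (n : ℝ)| ≤ 1 := by
        rw [hn]
        have h1 := Int.fract_nonneg (w.im / c.im)
        have h2 := Int.fract_lt_one (w.im / c.im)
        rw [Int.fract] at h1 h2
        rw [abs_le]; constructor <;> linarith
      calc |c.im| * |w.im / c.im - (n:ℝ)| ≤ |c.im| * 1 :=
            mul_le_mul_of_nonneg_left hfr (abs_nonneg _)
        _ = |c.im| := mul_one _
    rw [hfu]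
    calc ‖f u‖ ≤ C * Real.exp (r * |u.im|) := hb u
      _ ≤ C * Real.exp (|r| * |c.im|) := by
          apply mul_le_mul_of_nonneg_left _ hC
          apply Real.exp_le_exp.2
          calc r * |u.im| ≤ |r| * |u.im| :=
                mul_le_mul_of_nonneg_right (le_abs_self r) (abs_nonneg _)
            _ ≤ |r| * |c.im| := mul_le_mul_of_nonneg_left him (abs_nonneg _)
  exact hfd.apply_eq_apply_of_bounded hbdd z 0

/-- Key rigidity: a finite-exponential-type function into a vector space, periodic with a
period of nonzero imaginary part, is constant. -/
lemma finExpType_const_of_periodic {f : ℂ → V} (hf : FinExpType f)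
    (c : ℂ) (hcim : c.im ≠ 0) (hper : ∀ z, f (z + c) = f z) (z : ℂ) : f z = f 0 := by
  rw [← sub_eq_zero]
  rw [← Module.forall_dual_apply_eq_zero_iff ℂ]
  intro φ
  obtain ⟨hd, C, r, hC, hb⟩ := hf.dual φ
  have := const_of_periodic hd C r hC hb c hcim (fun w => by rw [hper w]) z
  rw [map_sub, this, sub_self]

end Aux

set_option linter.unusedSectionVars false in
lemma beta_zero {B : Type*} [Ring B] [Algebra ℂ B] (β : ℂ → (B ≃ₐ[ℂ] B))
    (hgrp : ∀ y z : ℂ, ∀ b : B, β (y + z) b = β y (β z b)) (b : B) :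
    β 0 b = b := by
  have h := hgrp 0 0 b
  simp only [add_zero] at h
  exact ((β 0).injective h.symm)

lemma beta_neg_cancel {B : Type*} [Ring B] [Algebra ℂ B] (β : ℂ → (B ≃ₐ[ℂ] B))
    (hgrp : ∀ y z : ℂ, ∀ b : B, β (y + z) b = β y (β z b)) (z : ℂ) (b : B) :
    β (-z) (β z b) = b := by
  rw [← hgrp, neg_add_cancel, beta_zero β hgrp]

lemma beta_cancel_neg {B : Type*} [Ring B] [Algebra ℂ B] (β : ℂ → (B ≃ₐ[ℂ] B))
    (hgrp : ∀ y z : ℂ, ∀ b : B, β (y + z) b = β y (β z b)) (z : ℂ) (b : B) :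
    β z (β (-z) b) = b := by
  have h := beta_neg_cancel β hgrp (-z) b
  rwa [neg_neg] at h

/-- The combined function `z ↦ β (σ z) (π (β z b))` is of finite exponential type, provided
`z ↦ β (σ z) v` is of finite exponential type for each `v`. -/
lemma finExpType_comb {B : Type*} [Ring B] [Algebra ℂ B] (β : ℂ → (B ≃ₐ[ℂ] B))
    (hβ : ∀ b : B, FinExpType (fun z => β z b)) (π : B →ₗ[ℂ] B)
    (σ : ℂ → ℂ) (hσ : ∀ v : B, FinExpType (fun z => β (σ z) v)) (b : B) :
    FinExpType (fun z => β (σ z) (π (β z b))) := by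
  obtain ⟨n, v, g, hg, hrep⟩ := hβ b
  have heq : (fun z => β (σ z) (π (β z b))) =
      fun z => ∑ j, g j z • β (σ z) (π (v j)) := by
    funext z
    rw [show (β z) b = ∑ j, g j z • v j from hrep z, map_sum, map_sum]
    congr 1
    funext j
    rw [map_smul, map_smul]
  rw [heq]
  exact FinExpType.sum Finset.univ (fun j z => g j z • β (σ z) (π (v j)))
    (fun j _ => FinExpType.smulFun (hg j) (hσ (π (v j))))

/-- Lemma A.2 of the paper: if a linear map `π` commutes (resp. anti-commutes in the parameter)
with an exponential one-parameter group `β` at a nonzero purely imaginary `c`, then it does so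
at every `z ∈ ℂ`. -/
theorem linear_map_commutes_of_commutes_at_imaginary
    {B : Type*} [Ring B] [Algebra ℂ B] [StarRing B] [StarModule ℂ B]
    (β : ℂ → (B ≃ₐ[ℂ] B)) (hβ : IsExpOneParamGroup β)
    (π : B →ₗ[ℂ] B)
    (c : ℂ) (hc : c ≠ 0) (hcim : c.re = 0) :
    ((∀ b : B, π (β c b) = β c (π b)) → ∀ z : ℂ, ∀ b : B, π (β z b) = β z (π b)) ∧
    ((∀ b : B, π (β c b) = β (-c) (π b)) → ∀ z : ℂ, ∀ b : B, π (β z b) = β (-z) (π b)) := by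
  obtain ⟨⟨hgrp, -⟩, hexp⟩ := hβ
  have hci : c.im ≠ 0 := fun h => hc (Complex.ext hcim h)
  have hswap : ∀ y w : ℂ, ∀ x : B, β (w + y) x = β y (β w x) := by
    intro y w x
    rw [show w + y = y + w by ring, hgrp y w]
  constructor
  · intro hcomm z b
    set f : ℂ → B := fun w => β (-w) (π (β w b)) with hf
    have hfe : FinExpType f :=
      finExpType_comb β hexp π (fun w => -w) (fun v => FinExpType.comp_neg (hexp v)) b
    have hper : ∀ w, f (w + c) = f w := by
      intro w
      show β (-(w + c)) (π (β (w + c) b)) = β (-w) (π (β w b))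
      rw [hswap c w b, hcomm (β w b), show -(w + c) = -w + -c by ring,
        hgrp (-w) (-c), beta_neg_cancel β hgrp c]
    have h0 : f 0 = π b := by
      show β (-0) (π (β 0 b)) = π b
      rw [neg_zero, beta_zero β hgrp b, beta_zero β hgrp]
    have hz : β (-z) (π (β z b)) = π b := by
      have := finExpType_const_of_periodic hfe c hci hper z
      rwa [h0] at this
    have := congrArg (β z) hz
    rwa [beta_cancel_neg β hgrp z] at this
  · intro hcomm z b
    set f : ℂ → B := fun w => β w (π (β w b)) with hf
    have hfe : FinExpType f := finExpType_comb β hexp π (fun w => w) hexp b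
    have hper : ∀ w, f (w + c) = f w := by
      intro w
      show β (w + c) (π (β (w + c) b)) = β w (π (β w b))
      rw [hswap c w b, hcomm (β w b), hgrp w c, beta_cancel_neg β hgrp c]
    have h0 : f 0 = π b := by
      show β 0 (π (β 0 b)) = π b
      rw [beta_zero β hgrp b, beta_zero β hgrp]
    have hz : β z (π (β z b)) = π b := by
      have := finExpType_const_of_periodic hfe c hci hper z
      rwa [h0] at this
    have := congrArg (β (-z)) hz
    rwa [beta_neg_cancel β hgrp z] at this
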